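/- (Caccioppoli-type inequality with negative exponents.) In the modified splitting setting described below, for every integer l ≥ 1 and every α > −1/2 there exists a constant c = c(α, l) > 0, independent of δ, u, and η, such that for every η ∈ C_c^∞(Ω) with 0 ≤ η ≤ 1: ∫_Ω D²f_δ(∇u)(∇∂₁u, ∇∂₁u) η^{2l} Γ₁^{α} dx ≤ c ∫_Ω D²f_δ(∇u)(∇η, ∇η) η^{2l−2} Γ₁^{α+1} dx. -/

import Mathlib

open Real MeasureTheory

/-- Partial derivative of `v : ℝ² → ℝ` in the `i`-th coordinate direction. -/
noncomputable def pd (i : Fin 2) (v : EuclideanSpace ℝ (Fin 2) → ℝ)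
    (x : EuclideanSpace ℝ (Fin 2)) : ℝ :=
  fderiv ℝ v x (EuclideanSpace.single i 1)

abbrev E2 := EuclideanSpace ℝ (Fin 2)

lemma contDiff_pd (i : Fin 2) {v : E2 → ℝ} (hv : ContDiff ℝ (⊤:ℕ∞) v) :
    ContDiff ℝ (⊤:ℕ∞) (pd i v) := by
  have h1 : ContDiff ℝ (⊤:ℕ∞) (fderiv ℝ v) := hv.fderiv_right (by exact_mod_cast le_top)
  exact (ContinuousLinearMap.apply ℝ ℝ (EuclideanSpace.single i 1)).contDiff.comp h1

lemma pd_eq_of_hasFDerivAt {v : E2 → ℝ} {x : E2} {L : E2 →L[ℝ] ℝ}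
    (h : HasFDerivAt v L x) (i : Fin 2) : pd i v x = L (EuclideanSpace.single i 1) := by
  rw [pd, h.fderiv]

lemma pd_mul {g h : E2 → ℝ} {x : E2} (hg : DifferentiableAt ℝ g x)
    (hh : DifferentiableAt ℝ h x) (i : Fin 2) :
    pd i (fun y => g y * h y) x = pd i g x * h x + g x * pd i h x := by
  rw [pd, fderiv_fun_mul hg hh]
  simp [pd, smul_eq_mul]
  ring

lemma pd_comp {G : ℝ → ℝ} {g : E2 → ℝ} {x : E2} {d : ℝ}
    (hG : HasDerivAt G d (g x)) (hg : DifferentiableAt ℝ g x) (i : Fin 2) :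
    pd i (fun y => G (g y)) x = d * pd i g x := by
  have h := hG.comp_hasFDerivAt x hg.hasFDerivAt
  rw [show (fun y => G (g y)) = G ∘ g from rfl, pd_eq_of_hasFDerivAt h]
  simp [pd, smul_eq_mul]

lemma pd_comm {v : E2 → ℝ} (hv : ContDiff ℝ (⊤:ℕ∞) v) (x : E2) :
    pd 0 (pd 1 v) x = pd 1 (pd 0 v) x := by
  have h1 : ContDiff ℝ (⊤:ℕ∞) (fderiv ℝ v) := hv.fderiv_right (by exact_mod_cast le_top)
  have hf : ∀ y, HasFDerivAt v (fderiv ℝ v y) y :=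
    fun y => (hv.differentiable (by simp) y).hasFDerivAt
  have hf'' : HasFDerivAt (fderiv ℝ v) (fderiv ℝ (fderiv ℝ v) x) x :=
    ((h1.differentiable (by simp)) x).hasFDerivAt
  have hsymm := second_derivative_symmetric hf hf''
    (EuclideanSpace.single 0 1) (EuclideanSpace.single 1 1)
  have key : ∀ i j : Fin 2, pd i (pd j v) x
      = fderiv ℝ (fderiv ℝ v) x (EuclideanSpace.single i 1) (EuclideanSpace.single j 1) := by
    intro i j
    have h0 := ((ContinuousLinearMap.apply ℝ ℝ (EuclideanSpace.single j 1)).hasFDerivAt.comp x hf'' :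
      HasFDerivAt (⇑(ContinuousLinearMap.apply ℝ ℝ (EuclideanSpace.single j 1)) ∘ fderiv ℝ v)
        ((ContinuousLinearMap.apply ℝ ℝ (EuclideanSpace.single j 1)).comp (fderiv ℝ (fderiv ℝ v) x)) x)
    have this : HasFDerivAt (pd j v)
        ((ContinuousLinearMap.apply ℝ ℝ (EuclideanSpace.single j 1)).comp (fderiv ℝ (fderiv ℝ v) x)) x := h0
    have h2 := pd_eq_of_hasFDerivAt this i
    simpa [pd] using h2
  rw [key 0 1, key 1 0, hsymm]

lemma pd_vanish {f : E2 → ℝ} {x : E2} (h : x ∉ tsupport f) (i : Fin 2) : pd i f x = 0 := by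
  have h0 : fderiv ℝ f x = 0 := by
    by_contra h'
    exact h (support_fderiv_subset ℝ (Function.mem_support.2 h'))
  rw [pd, h0]
  rfl

lemma tsupport_pd_subset {f : E2 → ℝ} (i : Fin 2) : tsupport (pd i f) ⊆ tsupport f := by
  apply closure_minimal _ (isClosed_tsupport f)
  intro x hx
  by_contra h
  exact (Function.mem_support.1 hx) (pd_vanish h i)

lemma cont_integrable_vanish {f : E2 → ℝ} {K : Set E2} (hf : Continuous f) (hK : IsCompact K)
    (h0 : ∀ x ∉ K, f x = 0) : MeasureTheory.Integrable f :=
  hf.integrable_of_hasCompactSupport (HasCompactSupport.intro hK h0)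


lemma continuous_abs_rpow {γ : ℝ} (hγ₀ : 0 ≤ γ) : Continuous fun t : ℝ => |t| ^ γ := by
  rcases eq_or_lt_of_le hγ₀ with h | h
  · subst h; simpa using continuous_const
  · apply continuous_abs.rpow_const
    intro x
    right; exact hγ₀

lemma hasDerivAt_abs_rpow_mul {γ : ℝ} (hγ₀ : 0 ≤ γ) (t : ℝ) :
    HasDerivAt (fun t : ℝ => |t| ^ γ * t) ((γ + 1) * |t| ^ γ) t := by
  rcases eq_or_lt_of_le hγ₀ with h | hγpos
  · have : (fun t : ℝ => |t| ^ γ * t) = fun t : ℝ => t := by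
      funext s; rw [← h, Real.rpow_zero, one_mul]
    rw [this, ← h, Real.rpow_zero]
    exact (hasDerivAt_id t).congr_deriv (by ring)
  rcases lt_trichotomy t 0 with ht | ht | ht
  · -- t < 0 : function equals (fun s => (-s)^γ * s) near t
    have hneg : HasDerivAt (fun s : ℝ => (-s) ^ γ * s)
        ((γ * (-t) ^ (γ-1) * (-1)) * t + (-t) ^ γ * 1) t := by
      have h1 : HasDerivAt (fun s : ℝ => (-s) ^ γ) (γ * (-t) ^ (γ-1) * (-1)) t := by
        have h2 : HasDerivAt (fun s : ℝ => s ^ γ) (γ * (-t) ^ (γ-1)) (-t) :=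
          Real.hasDerivAt_rpow_const (Or.inl (by linarith))
        exact h2.comp t (hasDerivAt_neg t)
      exact h1.mul (hasDerivAt_id t)
    have heq : (fun s : ℝ => |s| ^ γ * s) =ᶠ[nhds t] (fun s : ℝ => (-s) ^ γ * s) := by
      filter_upwards [isOpen_Iio.mem_nhds ht] with s hs
      rw [abs_of_neg hs]
    have : HasDerivAt (fun s : ℝ => |s| ^ γ * s) _ t := hneg.congr_of_eventuallyEq heq
    convert this using 1
    have habs : |t| = -t := abs_of_neg ht
    rw [habs]
    have : (-t) ^ γ = (-t) ^ (γ - 1) * (-t) := by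
      rw [← Real.rpow_add_one (by linarith : (-t) ≠ 0)]; ring_nf
    rw [this]; ring
  · -- t = 0
    subst ht
    rw [show |(0:ℝ)| ^ γ = 0 by simp [Real.zero_rpow (ne_of_gt hγpos)]]
    rw [hasDerivAt_iff_tendsto_slope]
    have : ∀ s : ℝ, s ≠ 0 → slope (fun t : ℝ => |t| ^ γ * t) 0 s = |s| ^ γ := by
      intro s hs
      simp only [slope, vsub_eq_sub, smul_eq_mul, sub_zero, abs_zero, mul_zero]; rw [inv_mul_eq_iff_eq_mul₀ hs]; ring
    rw [show (γ+1) * 0 = 0 by ring]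
    have hcont : Filter.Tendsto (fun s : ℝ => |s| ^ γ) (nhdsWithin 0 {0}ᶜ) (nhds 0) := by
      have := (continuous_abs_rpow hγ₀).tendsto 0
      simpa [Real.zero_rpow (ne_of_gt hγpos)] using this.mono_left nhdsWithin_le_nhds
    exact hcont.congr' (by filter_upwards [self_mem_nhdsWithin] with s hs; exact (this s hs).symm)
  · -- t > 0
    have hpos : HasDerivAt (fun s : ℝ => s ^ γ * s)
        ((γ * t ^ (γ-1)) * t + t ^ γ * 1) t := by
      have h2 : HasDerivAt (fun s : ℝ => s ^ γ) (γ * t ^ (γ-1)) t :=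
        Real.hasDerivAt_rpow_const (Or.inl (ne_of_gt ht))
      exact h2.mul (hasDerivAt_id t)
    have heq : (fun s : ℝ => |s| ^ γ * s) =ᶠ[nhds t] (fun s : ℝ => s ^ γ * s) := by
      filter_upwards [isOpen_Ioi.mem_nhds ht] with s hs
      rw [abs_of_pos hs]
    have : HasDerivAt (fun s : ℝ => |s| ^ γ * s) _ t := hpos.congr_of_eventuallyEq heq
    convert this using 1
    rw [abs_of_pos ht]
    have : t ^ γ = t ^ (γ - 1) * t := by
      rw [← Real.rpow_add_one (ne_of_gt ht)]; ring_nf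
    rw [this]; ring


lemma key_ineq (α lR ε A B p q w e1 e2 s r H : ℝ)
    (hA : 0 ≤ A) (hB : 0 ≤ B) (hH : 0 ≤ H)
    (hε : 0 < ε) (hε1 : ε ≤ 1) (hεα : ε ≤ 1 + 2*α) :
    (ε/2) * ((A*p^2 + B*q^2) * s^2 * (H*(1+w^2)))
      ≤ (2*lR^2/ε) * ((A*e1^2 + B*e2^2) * r^2 * (H*(1+w^2)^2))
        + (A*p*(p*(s^2*(H*(1+w^2))) + w*(2*lR*(s*r)*e1*(H*(1+w^2)) + s^2*(α*H*(2*w*p))))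
          + B*q*(q*(s^2*(H*(1+w^2))) + w*(2*lR*(s*r)*e2*(H*(1+w^2)) + s^2*(α*H*(2*w*q))))) := by
  set X := (A*p^2 + B*q^2) * s^2 * (H*(1+w^2)) with hX
  set T := (A*e1^2 + B*e2^2) * r^2 * (H*(1+w^2)^2) with hT
  set J := (A*p*(p*(s^2*(H*(1+w^2))) + w*(2*lR*(s*r)*e1*(H*(1+w^2)) + s^2*(α*H*(2*w*p))))
          + B*q*(q*(s^2*(H*(1+w^2))) + w*(2*lR*(s*r)*e2*(H*(1+w^2)) + s^2*(α*H*(2*w*q))))) with hJ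
  have hG : (0:ℝ) ≤ 1 + w^2 := by positivity
  have t1 : 0 ≤ A*H*(1+w^2)*(ε*(p*s)+2*lR*(w*(r*e1)))^2 := by positivity
  have t2 : 0 ≤ B*H*(1+w^2)*(ε*(q*s)+2*lR*(w*(r*e2)))^2 := by positivity
  have t3 : 0 ≤ (2*ε) * ((A*p^2+B*q^2)*s^2*H*((1-ε)+(1+2*α-ε)*w^2)) := by
    apply mul_nonneg (by linarith)
    apply mul_nonneg (by positivity)
    have : 0 ≤ (1+2*α-ε)*w^2 := mul_nonneg (by linarith) (sq_nonneg w)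
    linarith
  have t4 : 0 ≤ 4*lR^2*(A*H*(r^2*e1^2)+B*H*(r^2*e2^2))*(1+w^2) := by positivity
  have hmain : ε^2*X ≤ 4*lR^2*T + 2*ε*J := by
    rw [hX, hT, hJ]; nlinarith [t1, t2, t3, t4]
  have h2 : 0 ≤ (4*lR^2*T + 2*ε*J - ε^2*X)/(2*ε) := div_nonneg (by linarith) (by linarith)
  have h3 : (4*lR^2*T + 2*ε*J - ε^2*X)/(2*ε) = (2*lR^2/ε)*T + J - (ε/2)*X := by
    field_simp; ring
  linarith [h3 ▸ h2]

set_option maxHeartbeats 2000000 in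
/-- Caccioppoli-type inequality with negative exponents: in the modified
splitting setting (with `f_{1,δ}'' = δ + f₁''` and `f_{2,δ}''(t) = δ(γ+1)|t|^γ + f₂''(t)`),
for every `l ≥ 1` and `α > -1/2` there is `c = c(α,l) > 0`, independent of `δ`, `u`, `η`,
such that `∫ D²f_δ(∇u)(∇∂₁u,∇∂₁u) η^{2l} Γ₁^α ≤ c ∫ D²f_δ(∇u)(∇η,∇η) η^{2l-2} Γ₁^{α+1}`. -/
theorem caccioppoli_negative_exponents
    (Ω : Set (EuclideanSpace ℝ (Fin 2))) (hΩo : IsOpen Ω) (hΩb : Bornology.IsBounded Ω)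
    (f₁ f₂ : ℝ → ℝ) (hf₁ : ContDiff ℝ 2 f₁) (hf₂ : ContDiff ℝ 2 f₂)
    (c₁ c₂ cb₁ cb₂ μ₁ μ₂ γ : ℝ)
    (hc₁ : 0 < c₁) (hc₂ : 0 < c₂) (hcb₁ : 0 < cb₁) (hcb₂ : 0 < cb₂)
    (hμ₁ : 1 < μ₁) (hμ₂ : 1 < μ₂) (hμ₁' : μ₁ < 2)
    (hγ₀ : 0 ≤ γ) (hγ : γ < (2 - μ₁) / (1 + (2 - μ₁)))
    (hell₁ : ∀ t : ℝ, c₁ * (1 + |t|) ^ (-μ₁) ≤ deriv (deriv f₁) t ∧ deriv (deriv f₁) t ≤ cb₁)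
    (hell₂ : ∀ t : ℝ, c₂ * (1 + |t|) ^ (-μ₂) ≤ deriv (deriv f₂) t ∧
      deriv (deriv f₂) t ≤ cb₂ * (1 + |t|) ^ γ)
    (l : ℕ) (hl : 1 ≤ l) (α : ℝ) (hα : -(1/2) < α) :
    ∃ c : ℝ, 0 < c ∧
      ∀ (δ : ℝ), 0 < δ → δ ≤ 1 →
      ∀ (u : EuclideanSpace ℝ (Fin 2) → ℝ), ContDiff ℝ (⊤ : ℕ∞) u →
      (∀ x ∈ Ω, (δ + deriv (deriv f₁) (pd 0 u x)) * pd 0 (pd 0 u) x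
          + (δ * (γ + 1) * |pd 1 u x| ^ γ + deriv (deriv f₂) (pd 1 u x))
            * pd 1 (pd 1 u) x = 0) →
      ∀ (η : EuclideanSpace ℝ (Fin 2) → ℝ), ContDiff ℝ (⊤ : ℕ∞) η →
        HasCompactSupport η → tsupport η ⊆ Ω →
        (∀ x, 0 ≤ η x) → (∀ x, η x ≤ 1) →
      (∫ x in Ω,
          ((δ + deriv (deriv f₁) (pd 0 u x)) * (pd 0 (pd 0 u) x) ^ 2
            + (δ * (γ + 1) * |pd 1 u x| ^ γ + deriv (deriv f₂) (pd 1 u x))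
              * (pd 1 (pd 0 u) x) ^ 2)
          * η x ^ (2 * l) * (1 + (pd 0 u x) ^ 2) ^ α)
      ≤ c * ∫ x in Ω,
          ((δ + deriv (deriv f₁) (pd 0 u x)) * (pd 0 η x) ^ 2
            + (δ * (γ + 1) * |pd 1 u x| ^ γ + deriv (deriv f₂) (pd 1 u x))
              * (pd 1 η x) ^ 2)
          * η x ^ (2 * l - 2) * (1 + (pd 0 u x) ^ 2) ^ (α + 1) := by
  classical
  have h2a : (0:ℝ) < 1 + 2*α := by linarith
  set ε : ℝ := min 1 (1 + 2*α) with hεdef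
  have hε : 0 < ε := lt_min one_pos h2a
  have hε1 : ε ≤ 1 := min_le_left _ _
  have hεα : ε ≤ 1 + 2*α := min_le_right _ _
  have hlR : (1:ℝ) ≤ (l:ℝ) := by exact_mod_cast hl
  refine ⟨4*(l:ℝ)^2/ε^2, by positivity, ?_⟩
  intro δ hδ hδ1 u hu hEq η hη hηc hηΩ hη0 hη1
  -- basic differentiability
  have hwT : ContDiff ℝ (⊤:ℕ∞) (pd 0 u) := contDiff_pd 0 hu
  have hv2T : ContDiff ℝ (⊤:ℕ∞) (pd 1 u) := contDiff_pd 1 hu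
  have hwD : Differentiable ℝ (pd 0 u) := hwT.differentiable (by simp)
  have hv2D : Differentiable ℝ (pd 1 u) := hv2T.differentiable (by simp)
  have hηD : Differentiable ℝ η := hη.differentiable (by simp)
  have hΓT : ContDiff ℝ (⊤:ℕ∞) (fun x : E2 => 1 + pd 0 u x ^ 2) :=
    contDiff_const.add (hwT.pow 2)
  have hΓpos : ∀ x : E2, (0:ℝ) < 1 + pd 0 u x ^ 2 := fun x => by positivity
  have hGT : ContDiff ℝ (⊤:ℕ∞) (fun x : E2 => (1 + pd 0 u x ^ 2) ^ α) := by
    rw [contDiff_iff_contDiffAt]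
    intro x
    exact (Real.contDiffAt_rpow_const_of_ne (hΓpos x).ne').comp x hΓT.contDiffAt
  -- the test function χ
  set χ : E2 → ℝ := fun x => pd 0 u x * (η x ^ (2*l) * (1 + pd 0 u x ^ 2) ^ α) with hχdef
  have hχT : ContDiff ℝ (⊤:ℕ∞) χ := hwT.mul ((hη.pow (2*l)).mul hGT)
  have hχD : Differentiable ℝ χ := hχT.differentiable (by simp)
  have h2l0 : 2*l ≠ 0 := by omega
  have hχsupp : tsupport χ ⊆ tsupport η := by
    apply closure_minimal _ (isClosed_tsupport η)
    intro x hx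
    by_contra hxn
    exact (Function.mem_support.1 hx)
      (by rw [hχdef]; simp [image_eq_zero_of_notMem_tsupport hxn, zero_pow h2l0])
  have hηcK : IsCompact (tsupport η) := hηc
  have hvanχ : ∀ (i : Fin 2) (x : E2), x ∉ tsupport η → pd i χ x = 0 :=
    fun i x hx => pd_vanish (fun h => hx (hχsupp h)) i
  have hvanχ2 : ∀ (i j : Fin 2) (x : E2), x ∉ tsupport η → pd i (pd j χ) x = 0 :=
    fun i j x hx => pd_vanish (fun h => hx (hχsupp (tsupport_pd_subset j h))) i
  have hvanη : ∀ (i : Fin 2) (x : E2), x ∉ tsupport η → pd i η x = 0 :=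
    fun i x hx => pd_vanish hx i
  -- derivatives of the auxiliary real functions
  have hf₁d : ContDiff ℝ 1 (deriv f₁) := by
    have h' : ContDiff ℝ ((1:ℕ)+1 : ℕ) f₁ := by exact_mod_cast hf₁
    exact (contDiff_succ_iff_deriv.mp h').2.2
  have hf₂d : ContDiff ℝ 1 (deriv f₂) := by
    have h' : ContDiff ℝ ((1:ℕ)+1 : ℕ) f₂ := by exact_mod_cast hf₂
    exact (contDiff_succ_iff_deriv.mp h').2.2
  have hf₁'' : Continuous (deriv (deriv f₁)) := (contDiff_one_iff_deriv.mp hf₁d).2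
  have hf₂'' : Continuous (deriv (deriv f₂)) := (contDiff_one_iff_deriv.mp hf₂d).2
  have hg1 : ∀ t : ℝ, HasDerivAt (fun s : ℝ => deriv f₁ s + δ * s)
      (δ + deriv (deriv f₁) t) t := by
    intro t
    have h1 := ((hf₁d.differentiable one_ne_zero) t).hasDerivAt
    have h2 := h1.add ((hasDerivAt_id t).const_mul δ)
    refine h2.congr_deriv ?_
    ring
  have hg2 : ∀ t : ℝ, HasDerivAt (fun s : ℝ => deriv f₂ s + δ * (|s| ^ γ * s))
      (δ * (γ + 1) * |t| ^ γ + deriv (deriv f₂) t) t := by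
    intro t
    have h1 := ((hf₂d.differentiable one_ne_zero) t).hasDerivAt
    have h2 := h1.add ((hasDerivAt_abs_rpow_mul hγ₀ t).const_mul δ)
    refine h2.congr_deriv ?_
    ring
  -- P₁ and P₂
  set P₁ : E2 → ℝ := fun x => deriv f₁ (pd 0 u x) + δ * pd 0 u x with hP₁def
  set P₂ : E2 → ℝ := fun x => deriv f₂ (pd 1 u x) + δ * (|pd 1 u x| ^ γ * pd 1 u x) with hP₂def
  have hP₁pd : ∀ (i : Fin 2) (x : E2),
      pd i P₁ x = (δ + deriv (deriv f₁) (pd 0 u x)) * pd i (pd 0 u) x := by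
    intro i x
    rw [hP₁def]
    exact pd_comp (hg1 (pd 0 u x)) (hwD x) i
  have hP₂pd : ∀ (i : Fin 2) (x : E2),
      pd i P₂ x = (δ * (γ + 1) * |pd 1 u x| ^ γ + deriv (deriv f₂) (pd 1 u x))
        * pd i (pd 1 u) x := by
    intro i x
    rw [hP₂def]
    exact pd_comp (hg2 (pd 1 u x)) (hv2D x) i
  have hP₂D : Differentiable ℝ P₂ := by
    intro x
    exact ((hg2 (pd 1 u x)).comp_hasFDerivAt x (hv2D x).hasFDerivAt).differentiableAt
  -- continuity facts
  have habsγ : Continuous fun t : ℝ => |t| ^ γ := continuous_abs_rpow hγ₀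
  have hac : Continuous (fun x : E2 => δ + deriv (deriv f₁) (pd 0 u x)) :=
    continuous_const.add (hf₁''.comp hwT.continuous)
  have hbc : Continuous (fun x : E2 =>
      δ * (γ + 1) * |pd 1 u x| ^ γ + deriv (deriv f₂) (pd 1 u x)) :=
    (continuous_const.mul (habsγ.comp hv2T.continuous)).add (hf₂''.comp hv2T.continuous)
  have hP₂c : Continuous P₂ := by
    rw [hP₂def]
    exact (hf₂d.continuous.comp hv2T.continuous).add
      (continuous_const.mul ((habsγ.comp hv2T.continuous).mul hv2T.continuous))
  have hcpdP₂ : ∀ i : Fin 2, Continuous (fun x => pd i P₂ x) := by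
    intro i
    have : (fun x => pd i P₂ x) = fun x =>
        (δ * (γ + 1) * |pd 1 u x| ^ γ + deriv (deriv f₂) (pd 1 u x)) * pd i (pd 1 u) x :=
      funext fun x => hP₂pd i x
    rw [this]
    exact hbc.mul (contDiff_pd i hv2T).continuous
  have hcpdP₁ : Continuous (fun x => pd 0 P₁ x) := by
    have : (fun x => pd 0 P₁ x) = fun x =>
        (δ + deriv (deriv f₁) (pd 0 u x)) * pd 0 (pd 0 u) x := funext fun x => hP₁pd 0 x
    rw [this]
    exact hac.mul (contDiff_pd 0 hwT).continuous
  -- integrability facts for IBP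
  have hIc1 : Integrable (fun x => pd 0 (pd 1 χ) x * P₂ x) :=
    cont_integrable_vanish ((contDiff_pd 0 (contDiff_pd 1 hχT)).continuous.mul hP₂c) hηcK
      (fun x hx => by rw [hvanχ2 0 1 x hx, zero_mul])
  have hIc2 : Integrable (fun x => pd 1 χ x * pd 0 P₂ x) :=
    cont_integrable_vanish ((contDiff_pd 1 hχT).continuous.mul (hcpdP₂ 0)) hηcK
      (fun x hx => by rw [hvanχ 1 x hx, zero_mul])
  have hIc3 : Integrable (fun x => pd 1 χ x * P₂ x) :=
    cont_integrable_vanish ((contDiff_pd 1 hχT).continuous.mul hP₂c) hηcK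
      (fun x hx => by rw [hvanχ 1 x hx, zero_mul])
  have hIc4 : Integrable (fun x => pd 1 (pd 0 χ) x * P₂ x) :=
    cont_integrable_vanish ((contDiff_pd 1 (contDiff_pd 0 hχT)).continuous.mul hP₂c) hηcK
      (fun x hx => by rw [hvanχ2 1 0 x hx, zero_mul])
  have hIc5 : Integrable (fun x => pd 0 χ x * pd 1 P₂ x) :=
    cont_integrable_vanish ((contDiff_pd 0 hχT).continuous.mul (hcpdP₂ 1)) hηcK
      (fun x hx => by rw [hvanχ 0 x hx, zero_mul])
  have hIc6 : Integrable (fun x => pd 0 χ x * P₂ x) :=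
    cont_integrable_vanish ((contDiff_pd 0 hχT).continuous.mul hP₂c) hηcK
      (fun x hx => by rw [hvanχ 0 x hx, zero_mul])
  -- two integrations by parts
  have E1 : ∫ x, pd 1 χ x * pd 0 P₂ x = - ∫ x, pd 0 (pd 1 χ) x * P₂ x := by
    exact integral_mul_fderiv_eq_neg_fderiv_mul_of_integrable hIc1 hIc2 hIc3
      (fun x _ => (contDiff_pd 1 hχT).differentiable (by simp) x) (fun x _ => hP₂D x)
  have E2' : ∫ x, pd 0 χ x * pd 1 P₂ x = - ∫ x, pd 1 (pd 0 χ) x * P₂ x := by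
    exact integral_mul_fderiv_eq_neg_fderiv_mul_of_integrable hIc4 hIc5 hIc6
      (fun x _ => (contDiff_pd 0 hχT).differentiable (by simp) x) (fun x _ => hP₂D x)
  have hflip : ∫ x, pd 1 χ x * pd 0 P₂ x = ∫ x, pd 0 χ x * pd 1 P₂ x := by
    rw [E1, E2']
    have : (fun x => pd 0 (pd 1 χ) x * P₂ x) = (fun x => pd 1 (pd 0 χ) x * P₂ x) :=
      funext fun x => by rw [pd_comm hχT x]
    rw [this]
  -- integrability of the two halves of Ix
  have hIa : Integrable (fun x => pd 0 P₁ x * pd 0 χ x) :=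
    cont_integrable_vanish (hcpdP₁.mul (contDiff_pd 0 hχT).continuous) hηcK
      (fun x hx => by rw [hvanχ 0 x hx, mul_zero])
  have hIb : Integrable (fun x => pd 0 P₂ x * pd 1 χ x) :=
    cont_integrable_vanish ((hcpdP₂ 0).mul (contDiff_pd 1 hχT).continuous) hηcK
      (fun x hx => by rw [hvanχ 1 x hx, mul_zero])
  -- the integral of Ix vanishes
  have hSzero : ∫ x, (pd 0 P₁ x * pd 0 χ x + pd 0 P₂ x * pd 1 χ x) = 0 := by
    rw [integral_add hIa hIb]
    have h1 : ∫ x, pd 0 P₂ x * pd 1 χ x = ∫ x, pd 0 χ x * pd 1 P₂ x := by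
      rw [show (fun x => pd 0 P₂ x * pd 1 χ x) = (fun x => pd 1 χ x * pd 0 P₂ x)
        from funext fun x => mul_comm _ _]
      exact hflip
    rw [h1, ← integral_add hIa hIc5]
    have hz : (fun x => pd 0 P₁ x * pd 0 χ x + pd 0 χ x * pd 1 P₂ x) = fun _ : E2 => (0:ℝ) := by
      funext x
      by_cases hx : x ∈ Ω
      · have heq := hEq x hx
        rw [hP₁pd 0 x, hP₂pd 1 x]
        linear_combination (pd 0 χ x) * heq
      · have h0 : pd 0 χ x = 0 := hvanχ 0 x (fun hmem => hx (hηΩ hmem))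
        rw [h0]
        ring
    rw [hz]
    simp
  -- pointwise derivative computations for χ
  have hpdΓ : ∀ (i : Fin 2) (x : E2),
      pd i (fun y => 1 + pd 0 u y ^ 2) x = 2 * pd 0 u x * pd i (pd 0 u) x := by
    intro i x
    have hD : HasDerivAt (fun t : ℝ => 1 + t ^ 2) (2 * pd 0 u x) (pd 0 u x) := by
      simpa using ((hasDerivAt_pow 2 (pd 0 u x)).const_add 1)
    have h := pd_comp hD (hwD x) i
    rw [h]
  have hpdG : ∀ (i : Fin 2) (x : E2),
      pd i (fun y => (1 + pd 0 u y ^ 2) ^ α) x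
        = α * (1 + pd 0 u x ^ 2) ^ (α - 1) * (2 * pd 0 u x * pd i (pd 0 u) x) := by
    intro i x
    have hD : HasDerivAt (fun t : ℝ => t ^ α) (α * (1 + pd 0 u x ^ 2) ^ (α - 1))
        (1 + pd 0 u x ^ 2) := Real.hasDerivAt_rpow_const (Or.inl (hΓpos x).ne')
    have h := pd_comp hD ((hΓT.differentiable (by simp)) x) i
    rw [h, hpdΓ i x]
  have hpdpow : ∀ (i : Fin 2) (x : E2),
      pd i (fun y => η y ^ (2*l)) x = ((2*l : ℕ) : ℝ) * η x ^ (2*l - 1) * pd i η x := by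
    intro i x
    exact pd_comp (hasDerivAt_pow (2*l) (η x)) (hηD x) i
  have hpdχ : ∀ (i : Fin 2) (x : E2), pd i χ x
      = pd i (pd 0 u) x * (η x ^ (2*l) * (1 + pd 0 u x ^ 2) ^ α)
        + pd 0 u x * ((((2*l : ℕ) : ℝ) * η x ^ (2*l - 1) * pd i η x)
              * (1 + pd 0 u x ^ 2) ^ α
            + η x ^ (2*l) * (α * (1 + pd 0 u x ^ 2) ^ (α - 1)
              * (2 * pd 0 u x * pd i (pd 0 u) x))) := by
    intro i x
    have hinner : DifferentiableAt ℝ (fun y => η y ^ (2*l) * (1 + pd 0 u y ^ 2) ^ α) x :=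
      (((hη.pow (2*l)).mul hGT).differentiable (by simp)) x
    have h1 : pd i χ x = pd i (pd 0 u) x * (η x ^ (2*l) * (1 + pd 0 u x ^ 2) ^ α)
        + pd 0 u x * pd i (fun y => η y ^ (2*l) * (1 + pd 0 u y ^ 2) ^ α) x := by
      rw [hχdef]
      exact pd_mul (hwD x) hinner i
    have h2 : pd i (fun y => η y ^ (2*l) * (1 + pd 0 u y ^ 2) ^ α) x
        = pd i (fun y => η y ^ (2*l)) x * (1 + pd 0 u x ^ 2) ^ α
          + η x ^ (2*l) * pd i (fun y => (1 + pd 0 u y ^ 2) ^ α) x :=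
      pd_mul ((hη.pow (2*l)).differentiable (by simp) x)
        ((hGT.differentiable (by simp)) x) i
    rw [h1, h2, hpdpow i x, hpdG i x]
  -- the pointwise inequality
  have hpt : ∀ x : E2,
      (ε/2) * (((δ + deriv (deriv f₁) (pd 0 u x)) * (pd 0 (pd 0 u) x) ^ 2
          + (δ * (γ + 1) * |pd 1 u x| ^ γ + deriv (deriv f₂) (pd 1 u x))
            * (pd 1 (pd 0 u) x) ^ 2)
          * η x ^ (2 * l) * (1 + (pd 0 u x) ^ 2) ^ α)
      ≤ (2*(l:ℝ)^2/ε) * (((δ + deriv (deriv f₁) (pd 0 u x)) * (pd 0 η x) ^ 2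
          + (δ * (γ + 1) * |pd 1 u x| ^ γ + deriv (deriv f₂) (pd 1 u x))
            * (pd 1 η x) ^ 2)
          * η x ^ (2 * l - 2) * (1 + (pd 0 u x) ^ 2) ^ (α + 1))
        + (pd 0 P₁ x * pd 0 χ x + pd 0 P₂ x * pd 1 χ x) := by
    intro x
    have hA : 0 ≤ δ + deriv (deriv f₁) (pd 0 u x) := by
      have h1 := (hell₁ (pd 0 u x)).1
      have h2 : (0:ℝ) < c₁ * (1 + |pd 0 u x|) ^ (-μ₁) := by
        have : (0:ℝ) < 1 + |pd 0 u x| := by positivity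
        positivity
      linarith
    have hB : 0 ≤ δ * (γ + 1) * |pd 1 u x| ^ γ + deriv (deriv f₂) (pd 1 u x) := by
      have h1 := (hell₂ (pd 1 u x)).1
      have h2 : (0:ℝ) < c₂ * (1 + |pd 1 u x|) ^ (-μ₂) := by
        have : (0:ℝ) < 1 + |pd 1 u x| := by positivity
        positivity
      have h3 : 0 ≤ δ * (γ + 1) * |pd 1 u x| ^ γ := by
        have := Real.rpow_nonneg (abs_nonneg (pd 1 u x)) γ
        have hδγ : 0 ≤ δ * (γ + 1) := by positivity
        positivity
      linarith
    have hH : 0 ≤ (1 + pd 0 u x ^ 2) ^ (α - 1) := Real.rpow_nonneg (by positivity) _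
    have KI := key_ineq α (l:ℝ) ε (δ + deriv (deriv f₁) (pd 0 u x))
      (δ * (γ + 1) * |pd 1 u x| ^ γ + deriv (deriv f₂) (pd 1 u x))
      (pd 0 (pd 0 u) x) (pd 1 (pd 0 u) x) (pd 0 u x) (pd 0 η x) (pd 1 η x)
      (η x ^ l) (η x ^ (l-1)) ((1 + pd 0 u x ^ 2) ^ (α - 1)) hA hB hH hε hε1 hεα
    have hs2 : η x ^ (2*l) = (η x ^ l) ^ 2 := by
      rw [← pow_mul]
      congr 1
      omega
    have hr2 : η x ^ (2*l - 2) = (η x ^ (l-1)) ^ 2 := by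
      rw [← pow_mul]
      congr 1
      omega
    have hsr : η x ^ (2*l - 1) = η x ^ l * η x ^ (l-1) := by
      rw [← pow_add]
      congr 1
      omega
    have hGs : (1 + pd 0 u x ^ 2) ^ α
        = (1 + pd 0 u x ^ 2) ^ (α - 1) * (1 + pd 0 u x ^ 2) := by
      have h := Real.rpow_add_one (hΓpos x).ne' (α - 1)
      rw [show α - 1 + 1 = α by ring] at h
      exact h
    have hG1 : (1 + pd 0 u x ^ 2) ^ (α + 1)
        = (1 + pd 0 u x ^ 2) ^ (α - 1) * (1 + pd 0 u x ^ 2) ^ (2:ℕ) := by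
      have h := Real.rpow_add (hΓpos x) (α - 1) 2
      rw [show α - 1 + 2 = α + 1 by ring] at h
      rw [h, show ((2:ℝ)) = ((2:ℕ):ℝ) by norm_num, Real.rpow_natCast]
    have hIx : pd 0 P₁ x * pd 0 χ x + pd 0 P₂ x * pd 1 χ x
        = (δ + deriv (deriv f₁) (pd 0 u x)) * pd 0 (pd 0 u) x
            * (pd 0 (pd 0 u) x * ((η x ^ l) ^ 2
                * ((1 + pd 0 u x ^ 2) ^ (α-1) * (1 + pd 0 u x ^ 2)))
              + pd 0 u x * (2 * (l:ℝ) * (η x ^ l * η x ^ (l-1)) * pd 0 η x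
                  * ((1 + pd 0 u x ^ 2) ^ (α-1) * (1 + pd 0 u x ^ 2))
                + (η x ^ l) ^ 2 * (α * (1 + pd 0 u x ^ 2) ^ (α-1)
                  * (2 * pd 0 u x * pd 0 (pd 0 u) x))))
          + (δ * (γ + 1) * |pd 1 u x| ^ γ + deriv (deriv f₂) (pd 1 u x))
            * pd 1 (pd 0 u) x
            * (pd 1 (pd 0 u) x * ((η x ^ l) ^ 2
                * ((1 + pd 0 u x ^ 2) ^ (α-1) * (1 + pd 0 u x ^ 2)))
              + pd 0 u x * (2 * (l:ℝ) * (η x ^ l * η x ^ (l-1)) * pd 1 η x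
                  * ((1 + pd 0 u x ^ 2) ^ (α-1) * (1 + pd 0 u x ^ 2))
                + (η x ^ l) ^ 2 * (α * (1 + pd 0 u x ^ 2) ^ (α-1)
                  * (2 * pd 0 u x * pd 1 (pd 0 u) x)))) := by
      rw [hP₁pd 0 x, hP₂pd 0 x, hpdχ 0 x, hpdχ 1 x, pd_comm hu x, hs2, hsr, hGs]
      push_cast
      ring
    rw [hIx, hs2, hr2, hGs, hG1]
    linarith [KI]
  -- convert set integrals to full integrals
  have hLvan : ∀ x ∉ Ω,
      ((δ + deriv (deriv f₁) (pd 0 u x)) * (pd 0 (pd 0 u) x) ^ 2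
        + (δ * (γ + 1) * |pd 1 u x| ^ γ + deriv (deriv f₂) (pd 1 u x))
          * (pd 1 (pd 0 u) x) ^ 2)
        * η x ^ (2 * l) * (1 + (pd 0 u x) ^ 2) ^ α = 0 := by
    intro x hx
    have hxn : x ∉ tsupport η := fun hmem => hx (hηΩ hmem)
    rw [image_eq_zero_of_notMem_tsupport hxn]
    rw [zero_pow h2l0]
    ring
  have hRvan : ∀ x ∉ Ω,
      ((δ + deriv (deriv f₁) (pd 0 u x)) * (pd 0 η x) ^ 2
        + (δ * (γ + 1) * |pd 1 u x| ^ γ + deriv (deriv f₂) (pd 1 u x))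
          * (pd 1 η x) ^ 2)
        * η x ^ (2 * l - 2) * (1 + (pd 0 u x) ^ 2) ^ (α + 1) = 0 := by
    intro x hx
    have hxn : x ∉ tsupport η := fun hmem => hx (hηΩ hmem)
    rw [hvanη 0 x hxn, hvanη 1 x hxn]
    ring
  rw [setIntegral_eq_integral_of_forall_compl_eq_zero hLvan,
    setIntegral_eq_integral_of_forall_compl_eq_zero hRvan]
  -- integrability of the two main integrands
  have hΓαc : Continuous (fun x : E2 => (1 + pd 0 u x ^ 2) ^ α) := hGT.continuous
  have hΓα1c : Continuous (fun x : E2 => (1 + pd 0 u x ^ 2) ^ (α + 1)) := by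
    apply hΓT.continuous.rpow_const
    intro x
    exact Or.inl (hΓpos x).ne'
  have hIL : Integrable (fun x : E2 =>
      ((δ + deriv (deriv f₁) (pd 0 u x)) * (pd 0 (pd 0 u) x) ^ 2
        + (δ * (γ + 1) * |pd 1 u x| ^ γ + deriv (deriv f₂) (pd 1 u x))
          * (pd 1 (pd 0 u) x) ^ 2)
        * η x ^ (2 * l) * (1 + (pd 0 u x) ^ 2) ^ α) := by
    apply cont_integrable_vanish _ hηcK
    · intro x hx
      rw [image_eq_zero_of_notMem_tsupport hx, zero_pow h2l0]
      ring
    · exact (((hac.mul ((contDiff_pd 0 hwT).continuous.pow 2)).add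
        (hbc.mul ((contDiff_pd 1 hwT).continuous.pow 2))).mul
        (hη.continuous.pow (2*l))).mul hΓαc
  have hIR : Integrable (fun x : E2 =>
      ((δ + deriv (deriv f₁) (pd 0 u x)) * (pd 0 η x) ^ 2
        + (δ * (γ + 1) * |pd 1 u x| ^ γ + deriv (deriv f₂) (pd 1 u x))
          * (pd 1 η x) ^ 2)
        * η x ^ (2 * l - 2) * (1 + (pd 0 u x) ^ 2) ^ (α + 1)) := by
    apply cont_integrable_vanish _ hηcK
    · intro x hx
      rw [hvanη 0 x hx, hvanη 1 x hx]
      ring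
    · exact (((hac.mul ((contDiff_pd 0 hη).continuous.pow 2)).add
        (hbc.mul ((contDiff_pd 1 hη).continuous.pow 2))).mul
        (hη.continuous.pow (2*l - 2))).mul hΓα1c
  have hIxInt : Integrable (fun x => pd 0 P₁ x * pd 0 χ x + pd 0 P₂ x * pd 1 χ x) :=
    hIa.add hIb
  -- integrate the pointwise inequality
  have hmono : ∫ x, (ε/2) * (((δ + deriv (deriv f₁) (pd 0 u x)) * (pd 0 (pd 0 u) x) ^ 2
          + (δ * (γ + 1) * |pd 1 u x| ^ γ + deriv (deriv f₂) (pd 1 u x))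
            * (pd 1 (pd 0 u) x) ^ 2)
          * η x ^ (2 * l) * (1 + (pd 0 u x) ^ 2) ^ α)
      ≤ ∫ x, ((2*(l:ℝ)^2/ε) * (((δ + deriv (deriv f₁) (pd 0 u x)) * (pd 0 η x) ^ 2
          + (δ * (γ + 1) * |pd 1 u x| ^ γ + deriv (deriv f₂) (pd 1 u x))
            * (pd 1 η x) ^ 2)
          * η x ^ (2 * l - 2) * (1 + (pd 0 u x) ^ 2) ^ (α + 1))
        + (pd 0 P₁ x * pd 0 χ x + pd 0 P₂ x * pd 1 χ x)) := by
    apply integral_mono (hIL.const_mul _) ((hIR.const_mul _).add hIxInt)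
    intro x
    exact hpt x
  rw [integral_const_mul] at hmono
  rw [integral_add (hIR.const_mul _) hIxInt, integral_const_mul, hSzero, add_zero] at hmono
  set IL := ∫ x, ((δ + deriv (deriv f₁) (pd 0 u x)) * (pd 0 (pd 0 u) x) ^ 2
      + (δ * (γ + 1) * |pd 1 u x| ^ γ + deriv (deriv f₂) (pd 1 u x))
        * (pd 1 (pd 0 u) x) ^ 2)
      * η x ^ (2 * l) * (1 + (pd 0 u x) ^ 2) ^ α with hILdef
  set IR := ∫ x, ((δ + deriv (deriv f₁) (pd 0 u x)) * (pd 0 η x) ^ 2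
      + (δ * (γ + 1) * |pd 1 u x| ^ γ + deriv (deriv f₂) (pd 1 u x))
        * (pd 1 η x) ^ 2)
      * η x ^ (2 * l - 2) * (1 + (pd 0 u x) ^ 2) ^ (α + 1) with hIRdef
  have hfinal : IL ≤ 4*(l:ℝ)^2/ε^2 * IR := by
    have h1 : IL = (2/ε) * ((ε/2) * IL) := by
      field_simp
    have h2 : (2/ε) * ((ε/2) * IL) ≤ (2/ε) * ((2*(l:ℝ)^2/ε) * IR) := by
      apply mul_le_mul_of_nonneg_left hmono (by positivity)
    have h3 : (2/ε) * ((2*(l:ℝ)^2/ε) * IR) = 4*(l:ℝ)^2/ε^2 * IR := by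
      field_simp
      ring
    linarith [h1 ▸ h2, h3 ▸ h2]
  exact hfinal
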